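/- (Shuffle relation, (1,1)×(1) case) For every prime p > 3, in (ZMod p)[t]: £^{OY}_{(1,1)}(t) \cdot £_1(t) = 3 £^{OY}_{(1,1,1)}(t) - (Z^{(1)}(1,2) t^p + Z^{(2)}(1,2) t^{2p}), where Z^{(i)}(1,2) := \sum_{0<l_1,l_2<p, (i-1)p < l_1+l_2 < ip} l_1^{-1}(l_1+l_2)^{-2} in ZMod p. -/
import Mathlib
open Polynomial Finset




/-- £₁(t). -/
noncomputable def L1 (p : ℕ) : Polynomial (ZMod p) :=
  ∑ l ∈ Ico 1 p, C ((l : ZMod p)⁻¹) * X ^ l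

/-- £^OY_{(1,1)}(t). -/
noncomputable def OY11 (p : ℕ) : Polynomial (ZMod p) :=
  ∑ l1 ∈ Ico 1 p, ∑ l2 ∈ Ico 1 p,
    if ¬ p ∣ (l1 + l2) then
      C ((l1 : ZMod p)⁻¹ * ((l1 + l2 : ℕ) : ZMod p)⁻¹) * X ^ (l1 + l2)
    else 0

/-- £^OY_{(1,1,1)}(t). -/
noncomputable def OY111 (p : ℕ) : Polynomial (ZMod p) :=
  ∑ l1 ∈ Ico 1 p, ∑ l2 ∈ Ico 1 p, ∑ l3 ∈ Ico 1 p,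
    if ¬ p ∣ l1 ∧ ¬ p ∣ (l1 + l2) ∧ ¬ p ∣ (l1 + l2 + l3) then
      C ((l1 : ZMod p)⁻¹ * ((l1 + l2 : ℕ) : ZMod p)⁻¹ * ((l1 + l2 + l3 : ℕ) : ZMod p)⁻¹)
        * X ^ (l1 + l2 + l3)
    else 0

/-- Z^(i)(1,2) : the sum of l1⁻¹(l1+l2)⁻² over 0 < l1,l2 < p with (i-1)p < l1+l2 < ip. -/
def Zi12 (p i : ℕ) : ZMod p :=
  ∑ l1 ∈ Ico 1 p, ∑ l2 ∈ Ico 1 p,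
    if (i - 1) * p < l1 + l2 ∧ l1 + l2 < i * p then
      (l1 : ZMod p)⁻¹ * (((l1 + l2 : ℕ) : ZMod p)⁻¹) ^ 2
    else 0


section Helpers

variable (p : ℕ) [Fact p.Prime]

lemma sum_Ico_cast (f : ZMod p → ZMod p) :
    ∑ a ∈ Ico 1 p, f ((a : ZMod p)) = ∑ x ∈ (univ : Finset (ZMod p)).erase 0, f x := by
  refine Finset.sum_nbij' (i := fun a => (a : ZMod p)) (j := fun x => x.val) ?_ ?_ ?_ ?_ ?_
  · intro a ha
    rw [mem_Ico] at ha
    simp only [mem_erase, mem_univ, and_true]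
    rw [Ne, ZMod.natCast_eq_zero_iff]
    exact Nat.not_dvd_of_pos_of_lt ha.1 ha.2
  · intro x hx
    rw [mem_erase] at hx
    rw [mem_Ico]
    refine ⟨Nat.one_le_iff_ne_zero.2 (fun h => hx.1 (ZMod.val_eq_zero x |>.1 h)), ZMod.val_lt x⟩
  · intro a ha; rw [mem_Ico] at ha; exact ZMod.val_cast_of_lt ha.2
  · intro x hx; exact ZMod.natCast_rightInverse x
  · intro a ha; rfl

lemma sum_inv_pow_erase (k : ℕ) :
    ∑ x ∈ (univ : Finset (ZMod p)).erase 0, (x⁻¹) ^ k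
      = ∑ x ∈ (univ : Finset (ZMod p)).erase 0, x ^ k := by
  refine Finset.sum_nbij' (i := fun x => x⁻¹) (j := fun x => x⁻¹) ?_ ?_ ?_ ?_ ?_
  · intro x hx; rw [mem_erase] at hx ⊢; exact ⟨inv_ne_zero hx.1, mem_univ _⟩
  · intro x hx; rw [mem_erase] at hx ⊢; exact ⟨inv_ne_zero hx.1, mem_univ _⟩
  · intro x _; exact inv_inv x
  · intro x _; exact inv_inv x
  · intro x _; rfl

lemma sum_pow_erase (k : ℕ) (hk : 0 < k) (h : k < p - 1) :
    ∑ x ∈ (univ : Finset (ZMod p)).erase 0, x ^ k = 0 := by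
  have h0 : ∑ x : ZMod p, x ^ k = 0 := by
    have := FiniteField.sum_pow_lt_card_sub_one (K := ZMod p) k (by rwa [ZMod.card])
    exact this
  rw [← Finset.add_sum_erase _ _ (mem_univ (0 : ZMod p)), zero_pow hk.ne', zero_add] at h0
  exact h0

lemma sum_Ico_inv (h : 2 < p) : ∑ a ∈ Ico 1 p, ((a : ZMod p))⁻¹ = 0 := by
  have := sum_Ico_cast p (fun x => x⁻¹)
  rw [this]
  have h1 := sum_inv_pow_erase p 1
  have h2 := sum_pow_erase p 1 one_pos (by omega)
  simp only [pow_one] at h1 h2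
  rw [h1, h2]

lemma sum_Ico_inv_sq (h : 3 < p) : ∑ a ∈ Ico 1 p, ((a : ZMod p))⁻¹ ^ 2 = 0 := by
  have := sum_Ico_cast p (fun x => x⁻¹ ^ 2)
  rw [this, sum_inv_pow_erase p 2]
  exact sum_pow_erase p 2 two_pos (by omega)

lemma dvd_cases {n : ℕ} (hd : p ∣ n) (h0 : 0 < n) (h3 : n < 3 * p) : n = p ∨ n = 2 * p := by
  have h1 : p ≤ n := Nat.le_of_dvd h0 hd
  rcases eq_or_lt_of_le h1 with h | h
  · exact Or.inl h.symm
  · have hd2 : p ∣ (n - p) := Nat.dvd_sub hd dvd_rfl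
    have h2 : p ≤ n - p := Nat.le_of_dvd (by omega) hd2
    rcases eq_or_lt_of_le h2 with h' | h'
    · right; omega
    · exfalso
      have hd3 : p ∣ (n - p - p) := Nat.dvd_sub hd2 dvd_rfl
      have := Nat.le_of_dvd (by omega) hd3
      omega

lemma sum_dvd_collapse {M : Type*} [AddCommMonoid M] (s : ℕ) (hs : 0 < s) (hs2 : s < 2 * p)
    (hnd : ¬ p ∣ s) (F : ℕ → M) :
    ∑ c ∈ Ico 1 p, (if p ∣ (s + c) then F c else 0)
      = if s < p then F (p - s) else F (2 * p - s) := by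
  have hp2 : 2 ≤ p := (Fact.out : p.Prime).two_le
  have hsp : s ≠ p := fun h => hnd (h ▸ dvd_refl p)
  by_cases hlt : s < p
  · rw [if_pos hlt]
    refine Finset.sum_eq_single_of_mem (p - s) (by rw [mem_Ico]; omega) ?_ |>.trans ?_
    · intro c hc hne
      rw [mem_Ico] at hc
      rw [if_neg]
      intro hd
      have := dvd_cases p hd (by omega) (by omega)
      omega
    · rw [if_pos ⟨1, by omega⟩]
  · rw [if_neg hlt]
    have hgt : p < s := by omega
    refine Finset.sum_eq_single_of_mem (2 * p - s) (by rw [mem_Ico]; omega) ?_ |>.trans ?_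
    · intro c hc hne
      rw [mem_Ico] at hc
      rw [if_neg]
      intro hd
      have := dvd_cases p hd (by omega) (by omega)
      omega
    · rw [if_pos ⟨2, by omega⟩]

end Helpers

namespace SOO1

def iv (p m : ℕ) : ZMod p := (m : ZMod p)⁻¹

noncomputable def g (p a b c : ℕ) : Polynomial (ZMod p) :=
  if ¬ p ∣ (a+b) then C (iv p a * iv p (a+b) * iv p c) * X ^ (a+b+c) else 0

noncomputable def gP (p a b c : ℕ) : Polynomial (ZMod p) :=
  if ¬ p ∣ (a+b) ∧ p ∣ (a+b+c) then C (iv p a * iv p (a+b) * iv p c) * X ^ (a+b+c) else 0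

noncomputable def gN (p a b c : ℕ) : Polynomial (ZMod p) :=
  if ¬ p ∣ (a+b) ∧ ¬ p ∣ (a+b+c) then C (iv p a * iv p (a+b) * iv p c) * X ^ (a+b+c) else 0

noncomputable def hh (p a b c : ℕ) : Polynomial (ZMod p) :=
  if ¬ p ∣ (a+b) ∧ ¬ p ∣ (a+b+c) then
    C (iv p a * iv p (a+b) * iv p (a+b+c)) * X ^ (a+b+c) else 0

noncomputable def r (p a b c : ℕ) : Polynomial (ZMod p) :=
  if ¬ p ∣ (a+b) ∧ ¬ p ∣ (a+b+c) then
    C (iv p a * iv p c * iv p (a+b+c)) * X ^ (a+b+c) else 0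

noncomputable def rA (p a b c : ℕ) : Polynomial (ZMod p) :=
  if ¬ p ∣ (a+b) ∧ ¬ p ∣ (a+b+c) ∧ ¬ p ∣ (a+c) then
    C (iv p a * iv p (a+c) * iv p (a+b+c)) * X ^ (a+b+c) else 0

noncomputable def rB (p a b c : ℕ) : Polynomial (ZMod p) :=
  if ¬ p ∣ (a+b) ∧ ¬ p ∣ (a+b+c) ∧ ¬ p ∣ (a+c) then
    C (iv p c * iv p (a+c) * iv p (a+b+c)) * X ^ (a+b+c) else 0

noncomputable def rC (p a b c : ℕ) : Polynomial (ZMod p) :=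
  if ¬ p ∣ (a+b) ∧ ¬ p ∣ (a+b+c) ∧ p ∣ (a+c) then
    C (iv p a * iv p c * iv p (a+b+c)) * X ^ (a+b+c) else 0

noncomputable def hA (p a b c : ℕ) : Polynomial (ZMod p) :=
  if ¬ p ∣ (a+b) ∧ ¬ p ∣ (a+b+c) ∧ ¬ p ∣ (a+c) then
    C (iv p a * iv p (a+b) * iv p (a+b+c)) * X ^ (a+b+c) else 0

noncomputable def hA' (p a b c : ℕ) : Polynomial (ZMod p) :=
  if ¬ p ∣ (a+b) ∧ ¬ p ∣ (a+b+c) ∧ p ∣ (a+c) then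
    C (iv p a * iv p (a+b) * iv p (a+b+c)) * X ^ (a+b+c) else 0

noncomputable def hB (p a b c : ℕ) : Polynomial (ZMod p) :=
  if ¬ p ∣ (a+b) ∧ ¬ p ∣ (a+b+c) ∧ ¬ p ∣ (b+c) then
    C (iv p a * iv p (a+b) * iv p (a+b+c)) * X ^ (a+b+c) else 0

noncomputable def hB' (p a b c : ℕ) : Polynomial (ZMod p) :=
  if ¬ p ∣ (a+b) ∧ ¬ p ∣ (a+b+c) ∧ p ∣ (b+c) then
    C (iv p a * iv p (a+b) * iv p (a+b+c)) * X ^ (a+b+c) else 0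


noncomputable def e1 (p a b : ℕ) : Polynomial (ZMod p) :=
  if ¬ p ∣ (a+b) then C (iv p a * iv p (a+b) * iv p b) * X ^ (p+b) else 0

noncomputable def e2 (p a b : ℕ) : Polynomial (ZMod p) :=
  if ¬ p ∣ (a+b) then C (iv p a * iv p (a+b) * iv p a) * X ^ (p+a) else 0

noncomputable def e2s (p a b : ℕ) : Polynomial (ZMod p) :=
  if ¬ p ∣ (a+b) then C (iv p b * iv p (a+b) * iv p b) * X ^ (p+b) else 0

noncomputable def e3 (p a b : ℕ) : Polynomial (ZMod p) :=
  if ¬ p ∣ (a+b) then C (iv p a * iv p a * iv p b) * X ^ (p+b) else 0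

section Lemmas
variable (p : ℕ) [Fact p.Prime]

lemma expand : OY11 p * L1 p =
    ∑ a ∈ Ico 1 p, ∑ b ∈ Ico 1 p, ∑ c ∈ Ico 1 p, g p a b c := by
  rw [OY11, L1, Finset.sum_mul]
  refine sum_congr rfl fun a _ => ?_
  rw [Finset.sum_mul]
  refine sum_congr rfl fun b _ => ?_
  by_cases hd : p ∣ (a + b)
  · rw [if_neg (not_not_intro hd), zero_mul]
    symm
    refine Finset.sum_eq_zero fun c _ => ?_
    rw [g, if_neg (not_not_intro hd)]
  · rw [if_pos hd, Finset.mul_sum]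
    refine sum_congr rfl fun c _ => ?_
    rw [g, if_pos hd, iv, iv, iv]
    simp only [C_mul, pow_add]
    ring

lemma OY111_eq : OY111 p = ∑ a ∈ Ico 1 p, ∑ b ∈ Ico 1 p, ∑ c ∈ Ico 1 p, hh p a b c := by
  rw [OY111]
  refine sum_congr rfl fun a ha => sum_congr rfl fun b _ => sum_congr rfl fun c _ => ?_
  rw [mem_Ico] at ha
  have hnda : ¬ p ∣ a := Nat.not_dvd_of_pos_of_lt ha.1 ha.2
  rw [hh]
  simp only [hnda, not_false_iff, true_and, iv]

lemma cast_nz {m : ℕ} (h : ¬ p ∣ m) : ((m : ZMod p)) ≠ 0 := by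
  rw [Ne, ZMod.natCast_eq_zero_iff]; exact h

omit [Fact p.Prime] in
lemma mem_nz {a : ℕ} (ha : a ∈ Ico 1 p) : ¬ p ∣ a := by
  rw [mem_Ico] at ha; exact Nat.not_dvd_of_pos_of_lt ha.1 ha.2

omit [Fact p.Prime] in
lemma g_split (a b c : ℕ) : g p a b c = gP p a b c + gN p a b c := by
  rw [g, gP, gN]
  by_cases h1 : p ∣ (a + b) <;> by_cases h2 : p ∣ (a + b + c) <;> simp [h1, h2]

lemma pf3 {K : Type*} [Field K] {A S C : K} (hA : A ≠ 0) (hS : S ≠ 0) (hC : C ≠ 0)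
    (hN : S + C ≠ 0) :
    A⁻¹ * S⁻¹ * C⁻¹ = A⁻¹ * S⁻¹ * (S + C)⁻¹ + A⁻¹ * C⁻¹ * (S + C)⁻¹ := by
  field_simp
  ring

lemma pf2 {K : Type*} [Field K] {A C N : K} (hA : A ≠ 0) (hC : C ≠ 0) (hS : A + C ≠ 0) :
    A⁻¹ * C⁻¹ * N⁻¹ = A⁻¹ * (A + C)⁻¹ * N⁻¹ + C⁻¹ * (A + C)⁻¹ * N⁻¹ := by
  by_cases hN : N = 0
  · simp [hN]
  · field_simp
    ring

lemma gN_split {a b : ℕ} (c : ℕ) (ha : a ∈ Ico 1 p) (hc : c ∈ Ico 1 p) :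
    gN p a b c = hh p a b c + r p a b c := by
  rw [gN, hh, r]
  by_cases h1 : ¬ p ∣ (a + b) ∧ ¬ p ∣ (a + b + c)
  · rw [if_pos h1, if_pos h1, if_pos h1, ← add_mul, ← C_add]
    congr 2
    have hA : ((a : ZMod p)) ≠ 0 := cast_nz p (mem_nz p ha)
    have hC : ((c : ZMod p)) ≠ 0 := cast_nz p (mem_nz p hc)
    have hS : (((a + b : ℕ) : ZMod p)) ≠ 0 := cast_nz p h1.1
    have hN : (((a + b : ℕ) : ZMod p)) + ((c : ZMod p)) ≠ 0 := by
      have := cast_nz p h1.2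
      rwa [show ((a + b + c : ℕ) : ZMod p) = ((a + b : ℕ) : ZMod p) + ((c : ℕ) : ZMod p) by
        push_cast; ring] at this
    have hcast : ((a + b + c : ℕ) : ZMod p) = ((a + b : ℕ) : ZMod p) + ((c : ℕ) : ZMod p) := by
      push_cast; ring
    rw [iv, iv, iv, iv, hcast]
    exact pf3 hA hS hC hN
  · rw [if_neg h1, if_neg h1, if_neg h1, add_zero]

lemma r_split {a b : ℕ} (c : ℕ) (ha : a ∈ Ico 1 p) (hc : c ∈ Ico 1 p) :
    r p a b c = rA p a b c + rB p a b c + rC p a b c := by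
  rw [r, rA, rB, rC]
  by_cases h1 : ¬ p ∣ (a + b) ∧ ¬ p ∣ (a + b + c)
  · by_cases h2 : p ∣ (a + c)
    · have c1 : ¬(¬ p ∣ (a + b) ∧ ¬ p ∣ (a + b + c) ∧ ¬ p ∣ (a + c)) := fun h => h.2.2 h2
      rw [if_pos h1, if_neg c1, if_neg c1, if_pos ⟨h1.1, h1.2, h2⟩, zero_add, zero_add]
    · have c2 : ¬(¬ p ∣ (a + b) ∧ ¬ p ∣ (a + b + c) ∧ p ∣ (a + c)) := fun h => h2 h.2.2
      rw [if_pos h1, if_pos ⟨h1.1, h1.2, h2⟩, if_pos ⟨h1.1, h1.2, h2⟩, if_neg c2, add_zero,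
        ← add_mul, ← C_add]
      congr 2
      have hA : ((a : ZMod p)) ≠ 0 := cast_nz p (mem_nz p ha)
      have hC : ((c : ZMod p)) ≠ 0 := cast_nz p (mem_nz p hc)
      have hS : ((a : ZMod p)) + ((c : ZMod p)) ≠ 0 := by
        have := cast_nz p h2
        rwa [show ((a + c : ℕ) : ZMod p) = ((a : ZMod p)) + ((c : ℕ) : ZMod p) by
          push_cast; ring] at this
      have hcast : ((a + c : ℕ) : ZMod p) = ((a : ZMod p)) + ((c : ℕ) : ZMod p) := by
        push_cast; ring
      rw [iv, iv, iv, iv, hcast]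
      exact pf2 hA hC hS
  · have c3 : ¬(¬ p ∣ (a + b) ∧ ¬ p ∣ (a + b + c) ∧ ¬ p ∣ (a + c)) := fun h => h1 ⟨h.1, h.2.1⟩
    have c4 : ¬(¬ p ∣ (a + b) ∧ ¬ p ∣ (a + b + c) ∧ p ∣ (a + c)) := fun h => h1 ⟨h.1, h.2.1⟩
    rw [if_neg h1, if_neg c3, if_neg c3, if_neg c4, add_zero, add_zero]

lemma hh_splitA (a b c : ℕ) : hh p a b c = hA p a b c + hA' p a b c := by
  rw [hh, hA, hA']
  by_cases h1 : ¬ p ∣ (a + b) ∧ ¬ p ∣ (a + b + c)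
  · by_cases h2 : p ∣ (a + c)
    · rw [if_pos h1, if_neg (fun h => h.2.2 h2), if_pos ⟨h1.1, h1.2, h2⟩, zero_add]
    · rw [if_pos h1, if_pos ⟨h1.1, h1.2, h2⟩, if_neg (fun h => h2 h.2.2), add_zero]
  · rw [if_neg h1, if_neg (fun h => h1 ⟨h.1, h.2.1⟩), if_neg (fun h => h1 ⟨h.1, h.2.1⟩),
      add_zero]

lemma hh_splitB (a b c : ℕ) : hh p a b c = hB p a b c + hB' p a b c := by
  rw [hh, hB, hB']
  by_cases h1 : ¬ p ∣ (a + b) ∧ ¬ p ∣ (a + b + c)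
  · by_cases h2 : p ∣ (b + c)
    · rw [if_pos h1, if_neg (fun h => h.2.2 h2), if_pos ⟨h1.1, h1.2, h2⟩, zero_add]
    · rw [if_pos h1, if_pos ⟨h1.1, h1.2, h2⟩, if_neg (fun h => h2 h.2.2), add_zero]
  · rw [if_neg h1, if_neg (fun h => h1 ⟨h.1, h.2.1⟩), if_neg (fun h => h1 ⟨h.1, h.2.1⟩),
      add_zero]

lemma sum_rA_eq :
    (∑ a ∈ Ico 1 p, ∑ b ∈ Ico 1 p, ∑ c ∈ Ico 1 p, rA p a b c)
      = ∑ a ∈ Ico 1 p, ∑ b ∈ Ico 1 p, ∑ c ∈ Ico 1 p, hA p a b c := by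
  refine (sum_congr rfl fun a _ => Finset.sum_comm).trans ?_
  refine sum_congr rfl fun a _ => sum_congr rfl fun b _ => sum_congr rfl fun c _ => ?_
  rw [rA, hA, show a + c + b = a + b + c from by omega]
  exact if_congr (by tauto) rfl rfl

lemma sum_rB_eq :
    (∑ a ∈ Ico 1 p, ∑ b ∈ Ico 1 p, ∑ c ∈ Ico 1 p, rB p a b c)
      = ∑ a ∈ Ico 1 p, ∑ b ∈ Ico 1 p, ∑ c ∈ Ico 1 p, hB p a b c := by
  refine (sum_congr rfl fun a _ => Finset.sum_comm).trans ?_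
  refine Finset.sum_comm.trans ?_
  refine sum_congr rfl fun x _ => sum_congr rfl fun y _ => sum_congr rfl fun z _ => ?_
  rw [rB, hB, show y + z + x = x + y + z from by omega, show y + x = x + y from by omega]
  exact if_congr (by tauto) rfl rfl

lemma iv_p_add (b : ℕ) : iv p (p + b) = iv p b := by
  rw [iv, iv]
  push_cast [ZMod.natCast_self]
  rw [zero_add]

lemma cast_sub_p {m k : ℕ} (h : m ≤ k * p) : ((k * p - m : ℕ) : ZMod p) = -(m : ZMod p) := by
  rw [Nat.cast_sub h]
  push_cast [ZMod.natCast_self]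
  ring

lemma iv_sub_p {m k : ℕ} (h : m ≤ k * p) : iv p (k * p - m) = - iv p m := by
  rw [iv, iv, cast_sub_p p h, inv_neg]

lemma iv_sub_p1 {m : ℕ} (h : m ≤ p) : iv p (p - m) = - iv p m := by
  have := iv_sub_p p (k := 1) (m := m) (by omega)
  rwa [one_mul] at this

omit [Fact p.Prime] in
lemma not_dvd_p_add {b : ℕ} (hb : b ∈ Ico 1 p) : ¬ p ∣ (p + b) := by
  intro h
  exact mem_nz p hb ((Nat.dvd_add_right dvd_rfl).mp h)

lemma sum_hA'_inner {a b : ℕ} (ha : a ∈ Ico 1 p) (hb : b ∈ Ico 1 p) :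
    ∑ c ∈ Ico 1 p, hA' p a b c = e1 p a b := by
  have ha' := mem_Ico.mp ha
  have key : ∀ c, hA' p a b c = if p ∣ (a + c) then
      (if ¬ p ∣ (a+b) ∧ ¬ p ∣ (a+b+c) then
        C (iv p a * iv p (a+b) * iv p (a+b+c)) * X ^ (a+b+c) else 0) else 0 := by
    intro c
    rw [hA']
    by_cases h1 : p ∣ (a + c)
    · by_cases h2 : ¬ p ∣ (a+b) ∧ ¬ p ∣ (a+b+c)
      · rw [if_pos ⟨h2.1, h2.2, h1⟩, if_pos h1, if_pos h2]
      · rw [if_neg (fun h => h2 ⟨h.1, h.2.1⟩), if_pos h1, if_neg h2]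
    · rw [if_neg (fun h => h1 h.2.2), if_neg h1]
  rw [sum_congr rfl fun c _ => key c,
    sum_dvd_collapse p a (by omega) (by omega) (mem_nz p ha), if_pos ha'.2,
    show a + b + (p - a) = p + b from by omega, e1, iv_p_add]
  exact if_congr (by simp [not_dvd_p_add p hb]) rfl rfl

lemma sum_hB'_inner {a b : ℕ} (ha : a ∈ Ico 1 p) (hb : b ∈ Ico 1 p) :
    ∑ c ∈ Ico 1 p, hB' p a b c = e2 p a b := by
  have hb' := mem_Ico.mp hb
  have key : ∀ c, hB' p a b c = if p ∣ (b + c) then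
      (if ¬ p ∣ (a+b) ∧ ¬ p ∣ (a+b+c) then
        C (iv p a * iv p (a+b) * iv p (a+b+c)) * X ^ (a+b+c) else 0) else 0 := by
    intro c
    rw [hB']
    by_cases h1 : p ∣ (b + c)
    · by_cases h2 : ¬ p ∣ (a+b) ∧ ¬ p ∣ (a+b+c)
      · rw [if_pos ⟨h2.1, h2.2, h1⟩, if_pos h1, if_pos h2]
      · rw [if_neg (fun h => h2 ⟨h.1, h.2.1⟩), if_pos h1, if_neg h2]
    · rw [if_neg (fun h => h1 h.2.2), if_neg h1]
  rw [sum_congr rfl fun c _ => key c,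
    sum_dvd_collapse p b (by omega) (by omega) (mem_nz p hb), if_pos hb'.2,
    show a + b + (p - b) = p + a from by omega, e2, iv_p_add]
  exact if_congr (by simp [not_dvd_p_add p ha]) rfl rfl

lemma sum_rC_inner {a b : ℕ} (ha : a ∈ Ico 1 p) (hb : b ∈ Ico 1 p) :
    ∑ c ∈ Ico 1 p, rC p a b c = - e3 p a b := by
  have ha' := mem_Ico.mp ha
  have key : ∀ c, rC p a b c = if p ∣ (a + c) then
      (if ¬ p ∣ (a+b) ∧ ¬ p ∣ (a+b+c) then
        C (iv p a * iv p c * iv p (a+b+c)) * X ^ (a+b+c) else 0) else 0 := by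
    intro c
    rw [rC]
    by_cases h1 : p ∣ (a + c)
    · by_cases h2 : ¬ p ∣ (a+b) ∧ ¬ p ∣ (a+b+c)
      · rw [if_pos ⟨h2.1, h2.2, h1⟩, if_pos h1, if_pos h2]
      · rw [if_neg (fun h => h2 ⟨h.1, h.2.1⟩), if_pos h1, if_neg h2]
    · rw [if_neg (fun h => h1 h.2.2), if_neg h1]
  rw [sum_congr rfl fun c _ => key c,
    sum_dvd_collapse p a (by omega) (by omega) (mem_nz p ha), if_pos ha'.2,
    show a + b + (p - a) = p + b from by omega, e3, iv_p_add, iv_sub_p1 p (by omega)]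
  by_cases hd : ¬ p ∣ (a + b)
  · rw [if_pos, if_pos hd, show iv p a * (- iv p a) * iv p b
        = -(iv p a * iv p a * iv p b) from by ring, map_neg, neg_mul]
    exact ⟨hd, fun h => not_dvd_p_add p hb h⟩
  · rw [if_neg, if_neg hd, neg_zero]
    exact fun h => hd h.1

lemma pfE {K : Type*} [Field K] {A B S : K} (hA : A ≠ 0) (hB : B ≠ 0) (hS : S ≠ 0)
    (hSum : S = A + B) :
    A⁻¹ * S⁻¹ * B⁻¹ + B⁻¹ * S⁻¹ * B⁻¹ + A⁻¹ * A⁻¹ * B⁻¹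
      = A⁻¹ * B⁻¹ * B⁻¹ + A⁻¹ * A⁻¹ * B⁻¹ := by
  have key : A⁻¹ + B⁻¹ = S * (A⁻¹ * B⁻¹) := by
    rw [hSum]
    field_simp
    ring
  calc A⁻¹ * S⁻¹ * B⁻¹ + B⁻¹ * S⁻¹ * B⁻¹ + A⁻¹ * A⁻¹ * B⁻¹
      = (A⁻¹ + B⁻¹) * S⁻¹ * B⁻¹ + A⁻¹ * A⁻¹ * B⁻¹ := by ring
    _ = (S * S⁻¹) * (A⁻¹ * B⁻¹ * B⁻¹) + A⁻¹ * A⁻¹ * B⁻¹ := by rw [key]; ring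
    _ = A⁻¹ * B⁻¹ * B⁻¹ + A⁻¹ * A⁻¹ * B⁻¹ := by rw [mul_inv_cancel₀ hS, one_mul]

lemma inner_zero (h3 : 3 < p) {b : ℕ} (hb : b ∈ Ico 1 p) :
    ∑ a ∈ Ico 1 p, (if ¬ p ∣ (a+b) then
      iv p a * iv p (a+b) * iv p b + iv p b * iv p (a+b) * iv p b + iv p a * iv p a * iv p b
      else 0) = 0 := by
  have step : ∀ a ∈ Ico 1 p, (if ¬ p ∣ (a+b) then
      iv p a * iv p (a+b) * iv p b + iv p b * iv p (a+b) * iv p b + iv p a * iv p a * iv p b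
      else 0) = iv p a * iv p b * iv p b + iv p a * iv p a * iv p b := by
    intro a ha
    have hA : ((a : ZMod p)) ≠ 0 := cast_nz p (mem_nz p ha)
    have hB : ((b : ZMod p)) ≠ 0 := cast_nz p (mem_nz p hb)
    have hcast : ((a + b : ℕ) : ZMod p) = ((a : ZMod p)) + ((b : ZMod p)) := by
      push_cast; ring
    by_cases hd : p ∣ (a + b)
    · have h0 : ((a : ZMod p)) + ((b : ZMod p)) = 0 := by
        rw [← hcast]; exact (ZMod.natCast_eq_zero_iff _ _).mpr hd
      have hBA : ((b : ZMod p)) = -((a : ZMod p)) := by linear_combination h0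
      rw [if_neg (not_not_intro hd), iv, iv, hBA]
      rw [inv_neg]
      ring
    · rw [if_pos hd, iv, iv, iv]
      exact pfE hA hB (cast_nz p hd) hcast
  rw [sum_congr rfl step, Finset.sum_add_distrib, ← Finset.sum_mul, ← Finset.sum_mul,
    ← Finset.sum_mul]
  have h1 : ∑ a ∈ Ico 1 p, iv p a = 0 := by
    simpa [iv] using sum_Ico_inv p (by omega)
  have h2 : ∑ a ∈ Ico 1 p, iv p a * iv p a = 0 := by
    have := sum_Ico_inv_sq p h3
    simp only [pow_two] at this
    simpa [iv] using this
  rw [h1, h2]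
  simp

lemma sum_e2_eq :
    (∑ a ∈ Ico 1 p, ∑ b ∈ Ico 1 p, e2 p a b)
      = ∑ a ∈ Ico 1 p, ∑ b ∈ Ico 1 p, e2s p a b := by
  refine Finset.sum_comm.trans (sum_congr rfl fun a _ => sum_congr rfl fun b _ => ?_)
  rw [e2, e2s, show b + a = a + b from by omega]

lemma sum_e_zero (h3 : 3 < p) :
    (∑ a ∈ Ico 1 p, ∑ b ∈ Ico 1 p, (e1 p a b + e2s p a b + e3 p a b)) = 0 := by
  rw [Finset.sum_comm]
  refine Finset.sum_eq_zero fun b hb => ?_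
  have step : ∀ a ∈ Ico 1 p, e1 p a b + e2s p a b + e3 p a b
      = C (if ¬ p ∣ (a+b) then
          iv p a * iv p (a+b) * iv p b + iv p b * iv p (a+b) * iv p b
            + iv p a * iv p a * iv p b
          else 0) * X ^ (p+b) := by
    intro a _
    rw [e1, e2s, e3]
    by_cases hd : ¬ p ∣ (a + b)
    · rw [if_pos hd, if_pos hd, if_pos hd, if_pos hd, ← add_mul, ← add_mul, ← C_add, ← C_add]
    · rw [if_neg hd, if_neg hd, if_neg hd, if_neg hd, map_zero, zero_mul, add_zero, add_zero]
  rw [sum_congr rfl step, ← Finset.sum_mul, ← map_sum, inner_zero p h3 hb, map_zero, zero_mul]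

lemma gP_inner {a b : ℕ} (ha : a ∈ Ico 1 p) (hb : b ∈ Ico 1 p) :
    ∑ c ∈ Ico 1 p, gP p a b c =
      -((if (1-1)*p < a+b ∧ a+b < 1*p then
          C ((a : ZMod p)⁻¹ * (((a + b : ℕ) : ZMod p))⁻¹ ^ 2) else 0) * X ^ p
        + (if (2-1)*p < a+b ∧ a+b < 2*p then
          C ((a : ZMod p)⁻¹ * (((a + b : ℕ) : ZMod p))⁻¹ ^ 2) else 0) * X ^ (2*p)) := by
  have ha' := mem_Ico.mp ha
  have hb' := mem_Ico.mp hb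
  by_cases hd : p ∣ (a + b)
  · have hab : a + b = p := by
      have := dvd_cases p hd (by omega) (by omega)
      omega
    rw [Finset.sum_eq_zero fun c _ => by rw [gP, if_neg (fun h => h.1 hd)]]
    rw [if_neg (by omega), if_neg (by omega), zero_mul, zero_mul, add_zero, neg_zero]
  · have key : ∀ c, gP p a b c = if p ∣ ((a+b) + c) then
        C (iv p a * iv p (a+b) * iv p c) * X ^ (a+b+c) else 0 := by
      intro c
      rw [gP]
      by_cases h2 : p ∣ (a+b+c)
      · rw [if_pos ⟨hd, h2⟩, if_pos h2]
      · rw [if_neg (fun h => h2 h.2), if_neg h2]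
    rw [sum_congr rfl fun c _ => key c, sum_dvd_collapse p (a+b) (by omega) (by omega) hd]
    by_cases hlt : a + b < p
    · rw [if_pos hlt, show a + b + (p - (a+b)) = p from by omega, iv_sub_p1 p (by omega)]
      rw [if_pos (by omega), if_neg (by omega), zero_mul, add_zero]
      rw [show iv p a * iv p (a+b) * (- iv p (a+b))
          = -((a : ZMod p)⁻¹ * (((a + b : ℕ) : ZMod p))⁻¹ ^ 2) from by rw [iv, iv]; ring,
        map_neg, neg_mul]
    · have hgt : p < a + b := by
        rcases Nat.lt_or_ge p (a+b) with h | h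
        · exact h
        · exact absurd (by omega : a + b = p) (fun hh => hd (hh ▸ dvd_rfl))
      rw [if_neg hlt, show a + b + (2*p - (a+b)) = 2*p from by omega,
        iv_sub_p p (show a + b ≤ 2*p from by omega)]
      rw [if_neg (by omega), if_pos (by omega), zero_mul, zero_add]
      rw [show iv p a * iv p (a+b) * (- iv p (a+b))
          = -((a : ZMod p)⁻¹ * (((a + b : ℕ) : ZMod p))⁻¹ ^ 2) from by rw [iv, iv]; ring,
        map_neg, neg_mul]

lemma alpha :
    (∑ a ∈ Ico 1 p, ∑ b ∈ Ico 1 p, ∑ c ∈ Ico 1 p, gP p a b c)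
      = -(C (Zi12 p 1) * X ^ p + C (Zi12 p 2) * X ^ (2 * p)) := by
  have expand1 : ∀ i : ℕ, C (Zi12 p i) * X ^ (i * p) = ∑ a ∈ Ico 1 p, ∑ b ∈ Ico 1 p,
      (if (i-1)*p < a+b ∧ a+b < i*p then
        C ((a : ZMod p)⁻¹ * (((a + b : ℕ) : ZMod p))⁻¹ ^ 2) else 0) * X ^ (i * p) := by
    intro i
    rw [Zi12, map_sum, Finset.sum_mul]
    refine sum_congr rfl fun a _ => ?_
    rw [map_sum, Finset.sum_mul]
    refine sum_congr rfl fun b _ => ?_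
    rw [apply_ite C, map_zero]
  have e1' := expand1 1
  have e2' := expand1 2
  rw [one_mul] at e1'
  rw [e1', e2', neg_add, ← Finset.sum_neg_distrib, ← Finset.sum_neg_distrib,
    ← Finset.sum_add_distrib]
  refine sum_congr rfl fun a ha => ?_
  rw [← Finset.sum_neg_distrib, ← Finset.sum_neg_distrib, ← Finset.sum_add_distrib]
  refine sum_congr rfl fun b hb => ?_
  rw [gP_inner p ha hb, neg_add, one_mul]

end Lemmas

end SOO1

open SOO1 in
theorem shuffle_one_one_times_one (p : ℕ) (hp : p.Prime) (h3 : 3 < p) :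
    OY11 p * L1 p = 3 * OY111 p - (C (Zi12 p 1) * X ^ p + C (Zi12 p 2) * X ^ (2 * p)) := by
  haveI : Fact p.Prime := ⟨hp⟩
  have h1 := expand p
  have h2 : (∑ a ∈ Ico 1 p, ∑ b ∈ Ico 1 p, ∑ c ∈ Ico 1 p, g p a b c)
      = (∑ a ∈ Ico 1 p, ∑ b ∈ Ico 1 p, ∑ c ∈ Ico 1 p, gP p a b c)
        + (∑ a ∈ Ico 1 p, ∑ b ∈ Ico 1 p, ∑ c ∈ Ico 1 p, gN p a b c) := by
    rw [← Finset.sum_add_distrib]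
    refine sum_congr rfl fun a _ => ?_
    rw [← Finset.sum_add_distrib]
    refine sum_congr rfl fun b _ => ?_
    rw [← Finset.sum_add_distrib]
    exact sum_congr rfl fun c _ => g_split p a b c
  have h3' : (∑ a ∈ Ico 1 p, ∑ b ∈ Ico 1 p, ∑ c ∈ Ico 1 p, gN p a b c)
      = (∑ a ∈ Ico 1 p, ∑ b ∈ Ico 1 p, ∑ c ∈ Ico 1 p, hh p a b c)
        + (∑ a ∈ Ico 1 p, ∑ b ∈ Ico 1 p, ∑ c ∈ Ico 1 p, r p a b c) := by
    rw [← Finset.sum_add_distrib]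
    refine sum_congr rfl fun a ha => ?_
    rw [← Finset.sum_add_distrib]
    refine sum_congr rfl fun b _ => ?_
    rw [← Finset.sum_add_distrib]
    exact sum_congr rfl fun c hc => gN_split p c ha hc
  have h4 : (∑ a ∈ Ico 1 p, ∑ b ∈ Ico 1 p, ∑ c ∈ Ico 1 p, r p a b c)
      = (∑ a ∈ Ico 1 p, ∑ b ∈ Ico 1 p, ∑ c ∈ Ico 1 p, rA p a b c)
        + (∑ a ∈ Ico 1 p, ∑ b ∈ Ico 1 p, ∑ c ∈ Ico 1 p, rB p a b c)
        + (∑ a ∈ Ico 1 p, ∑ b ∈ Ico 1 p, ∑ c ∈ Ico 1 p, rC p a b c) := by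
    rw [← Finset.sum_add_distrib, ← Finset.sum_add_distrib]
    refine sum_congr rfl fun a ha => ?_
    rw [← Finset.sum_add_distrib, ← Finset.sum_add_distrib]
    refine sum_congr rfl fun b _ => ?_
    rw [← Finset.sum_add_distrib, ← Finset.sum_add_distrib]
    exact sum_congr rfl fun c hc => r_split p c ha hc
  have h5 : (∑ a ∈ Ico 1 p, ∑ b ∈ Ico 1 p, ∑ c ∈ Ico 1 p, hh p a b c)
      = (∑ a ∈ Ico 1 p, ∑ b ∈ Ico 1 p, ∑ c ∈ Ico 1 p, hA p a b c)
        + (∑ a ∈ Ico 1 p, ∑ b ∈ Ico 1 p, ∑ c ∈ Ico 1 p, hA' p a b c) := by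
    rw [← Finset.sum_add_distrib]
    refine sum_congr rfl fun a _ => ?_
    rw [← Finset.sum_add_distrib]
    refine sum_congr rfl fun b _ => ?_
    rw [← Finset.sum_add_distrib]
    exact sum_congr rfl fun c _ => hh_splitA p a b c
  have h6 : (∑ a ∈ Ico 1 p, ∑ b ∈ Ico 1 p, ∑ c ∈ Ico 1 p, hh p a b c)
      = (∑ a ∈ Ico 1 p, ∑ b ∈ Ico 1 p, ∑ c ∈ Ico 1 p, hB p a b c)
        + (∑ a ∈ Ico 1 p, ∑ b ∈ Ico 1 p, ∑ c ∈ Ico 1 p, hB' p a b c) := by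
    rw [← Finset.sum_add_distrib]
    refine sum_congr rfl fun a _ => ?_
    rw [← Finset.sum_add_distrib]
    refine sum_congr rfl fun b _ => ?_
    rw [← Finset.sum_add_distrib]
    exact sum_congr rfl fun c _ => hh_splitB p a b c
  have h7 := sum_rA_eq p
  have h8 := sum_rB_eq p
  have h9 : (∑ a ∈ Ico 1 p, ∑ b ∈ Ico 1 p, ∑ c ∈ Ico 1 p, hA' p a b c)
      = ∑ a ∈ Ico 1 p, ∑ b ∈ Ico 1 p, e1 p a b :=
    sum_congr rfl fun a ha => sum_congr rfl fun b hb => sum_hA'_inner p ha hb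
  have h10 : (∑ a ∈ Ico 1 p, ∑ b ∈ Ico 1 p, ∑ c ∈ Ico 1 p, hB' p a b c)
      = ∑ a ∈ Ico 1 p, ∑ b ∈ Ico 1 p, e2 p a b :=
    sum_congr rfl fun a ha => sum_congr rfl fun b hb => sum_hB'_inner p ha hb
  have h11 : (∑ a ∈ Ico 1 p, ∑ b ∈ Ico 1 p, ∑ c ∈ Ico 1 p, rC p a b c)
      = -(∑ a ∈ Ico 1 p, ∑ b ∈ Ico 1 p, e3 p a b) := by
    rw [← Finset.sum_neg_distrib]
    refine sum_congr rfl fun a ha => ?_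
    rw [← Finset.sum_neg_distrib]
    exact sum_congr rfl fun b hb => sum_rC_inner p ha hb
  have h12 := sum_e2_eq p
  have h13 : (∑ a ∈ Ico 1 p, ∑ b ∈ Ico 1 p, e1 p a b)
      + (∑ a ∈ Ico 1 p, ∑ b ∈ Ico 1 p, e2s p a b)
      + (∑ a ∈ Ico 1 p, ∑ b ∈ Ico 1 p, e3 p a b) = 0 := by
    rw [← sum_e_zero p h3]
    rw [← Finset.sum_add_distrib, ← Finset.sum_add_distrib]
    refine sum_congr rfl fun a _ => ?_
    rw [← Finset.sum_add_distrib, ← Finset.sum_add_distrib]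
  have h14 := alpha p
  have h15 := OY111_eq p
  linear_combination h1 + h2 + h3' + h4 - h5 - h6 + h7 + h8 - h9 - h10 + h11 - h12 - h13
    + h14 - 3 * h15
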